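/- Let S be the monoid presented by generators x_0, x_1, x_2, … subject to the relations x_0 x_k = x_0 and x_k x_0 = x_0 for all k ≥ 1, x_k^k = x_k^{k+1} for all k ≥ 1, and x_i x_j = x_j^2 for all i, j ≥ 1, and for each i ≥ 0 let σ_i = {(s,t) ∈ S×S : ∃ p, q ∈ R_i with ps = qt} where R_i = {x_i^n : n ≥ 0}. Then the relations σ_i are pairwise distinct: if i ≠ j then σ_i ≠ σ_j. -/

import Mathlib

/-- The defining relations of the Qiao–Wei monoid: `x₀xₖ = xₖx₀ = x₀` for `k ≥ 1`,
`xₖ^k = xₖ^(k+1)` for `k ≥ 1`, and `xᵢxⱼ = xⱼ²` for `i, j ≥ 1`, as a relation on the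
free monoid on `ℕ`. -/
inductive QWRel : FreeMonoid ℕ → FreeMonoid ℕ → Prop
  | zero_mul (k : ℕ) : 1 ≤ k →
      QWRel (FreeMonoid.of 0 * FreeMonoid.of k) (FreeMonoid.of 0)
  | mul_zero (k : ℕ) : 1 ≤ k →
      QWRel (FreeMonoid.of k * FreeMonoid.of 0) (FreeMonoid.of 0)
  | pow (k : ℕ) : 1 ≤ k →
      QWRel (FreeMonoid.of k ^ k) (FreeMonoid.of k ^ (k + 1))
  | mul (i j : ℕ) : 1 ≤ i → 1 ≤ j →
      QWRel (FreeMonoid.of i * FreeMonoid.of j) (FreeMonoid.of j ^ 2)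

/-- The Qiao–Wei monoid `S = ⟨x₀,x₁,… ∣ x₀xₖ = xₖx₀ = x₀, xₖ^k = xₖ^(k+1) (k ≥ 1),
xᵢxⱼ = xⱼ² (i,j ≥ 1)⟩`: the quotient of the free monoid on `ℕ` by the congruence
generated by the relations. -/
abbrev QWMonoid : Type := (conGen QWRel).Quotient

/-- The generator `xᵢ` of the Qiao–Wei monoid. -/
def x (i : ℕ) : QWMonoid := Con.mk' (conGen QWRel) (FreeMonoid.of i)

/-- The relation `σᵢ` on `S`: `(s,t) ∈ σᵢ` iff `ps = qt` for some `p, q` in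
`Rᵢ = {xᵢⁿ : n ≥ 0}`. -/
def σ (i : ℕ) : QWMonoid → QWMonoid → Prop := fun s t =>
  ∃ p q : QWMonoid, (∃ m : ℕ, p = x i ^ m) ∧ (∃ n : ℕ, q = x i ^ n) ∧ p * s = q * t

/-! ### Auxiliary: a 4-element monoid detecting the "last positive letter" -/

/-- A four element monoid: identity `one`, absorbing `z`, and a right-zero pair `a`, `b`. -/
inductive M4 : Type
  | one | a | b | z
deriving DecidableEq

instance : Fintype M4 := ⟨{.one, .a, .b, .z}, by intro u; cases u <;> decide⟩

namespace M4

def mul' : M4 → M4 → M4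
  | .one, v => v
  | u, .one => u
  | .z, _ => .z
  | _, .z => .z
  | _, v => v

instance : Monoid M4 where
  mul := mul'
  one := .one
  one_mul := by decide
  mul_one := by decide
  mul_assoc := by decide

lemma idem (u : M4) : u * u = u := by revert u; decide

lemma pow_succ_eq (u : M4) (n : ℕ) : u ^ (n + 1) = u := by
  induction n with
  | zero => exact pow_one u
  | succ n ih => rw [pow_succ, ih, idem]

lemma b_pow (m : ℕ) : (b : M4) ^ m = 1 ∨ (b : M4) ^ m = b := by
  cases m with
  | zero => left; rfl
  | succ n => right; exact pow_succ_eq _ _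

end M4

/-- The generator assignment for the `M4`-valued invariant with parameter `i`. -/
def fM4 (i : ℕ) : ℕ → M4 := fun n => if n = 0 then .z else if n = i then .a else .b

lemma fM4_pos {i k : ℕ} (hk : 1 ≤ k) : fM4 i k = .a ∨ fM4 i k = .b := by
  unfold fM4
  rw [if_neg (by omega)]
  split <;> simp

lemma M4_hom_rel (i : ℕ) : conGen QWRel ≤ Con.ker (FreeMonoid.lift (fM4 i)) := by
  apply Con.conGen_le.2
  intro u v h
  cases h with
  | zero_mul k hk =>
      simp only [Con.ker_rel, map_mul, FreeMonoid.lift_eval_of]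
      have : fM4 i 0 = .z := rfl
      rw [this]
      rcases fM4_pos (i := i) hk with h | h <;> rw [h] <;> decide
  | mul_zero k hk =>
      simp only [Con.ker_rel, map_mul, FreeMonoid.lift_eval_of]
      have : fM4 i 0 = .z := rfl
      rw [this]
      rcases fM4_pos (i := i) hk with h | h <;> rw [h] <;> decide
  | pow k hk =>
      simp only [Con.ker_rel, map_pow, FreeMonoid.lift_eval_of]
      obtain ⟨m, rfl⟩ : ∃ m, k = m + 1 := ⟨k - 1, by omega⟩
      rw [M4.pow_succ_eq, M4.pow_succ_eq]
  | mul a b ha hb =>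
      simp only [Con.ker_rel, map_mul, map_pow, FreeMonoid.lift_eval_of]
      rcases fM4_pos (i := i) ha with h | h <;>
        rcases fM4_pos (i := i) hb with h' | h' <;> rw [h, h'] <;> decide

/-- The `M4`-valued invariant on the Qiao–Wei monoid. -/
def g4 (i : ℕ) : QWMonoid →* M4 :=
  Con.lift _ (FreeMonoid.lift (fM4 i)) (M4_hom_rel i)

lemma g4_x (i k : ℕ) : g4 i (x k) = fM4 i k := by
  simp [g4, x, Con.lift_mk']

/-! ### Auxiliary: the "number of occurrences of `x₀`" invariant -/

def fN : ℕ → Multiplicative ℕ := fun n => Multiplicative.ofAdd (if n = 0 then 1 else 0)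

lemma N_hom_rel : conGen QWRel ≤ Con.ker (FreeMonoid.lift fN) := by
  apply Con.conGen_le.2
  intro u v h
  have h1 : ∀ k, 1 ≤ k → fN k = 1 := by
    intro k hk; unfold fN; rw [if_neg (by omega)]; rfl
  cases h with
  | zero_mul k hk =>
      simp only [Con.ker_rel, map_mul, FreeMonoid.lift_eval_of, h1 k hk, mul_one]
  | mul_zero k hk =>
      simp only [Con.ker_rel, map_mul, FreeMonoid.lift_eval_of, h1 k hk, one_mul]
  | pow k hk =>
      simp only [Con.ker_rel, map_pow, FreeMonoid.lift_eval_of, h1 k hk, one_pow]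
  | mul a b ha hb =>
      simp only [Con.ker_rel, map_mul, map_pow, FreeMonoid.lift_eval_of, h1 a ha, h1 b hb,
        one_mul, one_pow]

def gN : QWMonoid →* Multiplicative ℕ :=
  Con.lift _ (FreeMonoid.lift fN) N_hom_rel

lemma gN_x (k : ℕ) : gN (x k) = fN k := by
  simp [gN, x, Con.lift_mk']

/-! ### The key separating facts -/

lemma sigma_self (i : ℕ) : σ i 1 (x i) :=
  ⟨x i ^ 1, x i ^ 0, ⟨1, rfl⟩, ⟨0, rfl⟩, by simp⟩

lemma not_sigma_zero {i : ℕ} (hi : 1 ≤ i) : ¬ σ i 1 (x 0) := by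
  rintro ⟨p, q, ⟨m, rfl⟩, ⟨n, rfl⟩, heq⟩
  have := congrArg gN heq
  simp only [map_mul, map_pow, map_one, gN_x, mul_one] at this
  have hi' : fN i = 1 := by unfold fN; rw [if_neg (by omega)]; rfl
  have h0 : fN 0 = Multiplicative.ofAdd 1 := rfl
  simp only [hi', h0, one_pow, one_mul] at this
  exact absurd this.symm (by decide)

lemma not_sigma_other {i j : ℕ} (hi : 1 ≤ i) (hj : 1 ≤ j) (hij : i ≠ j) :
    ¬ σ j 1 (x i) := by
  rintro ⟨p, q, ⟨m, rfl⟩, ⟨n, rfl⟩, heq⟩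
  have := congrArg (g4 i) heq
  simp only [map_mul, map_pow, map_one, g4_x, mul_one] at this
  have hii : fM4 i i = .a := by unfold fM4; rw [if_neg (by omega), if_pos rfl]
  have hji : fM4 i j = .b := by unfold fM4; rw [if_neg (by omega), if_neg (by omega)]
  rw [hii, hji] at this
  rcases M4.b_pow m with h | h <;> rcases M4.b_pow n with h' | h' <;>
    rw [h, h'] at this <;> revert this <;> decide

/-- The relations `σᵢ` are pairwise distinct: `i ≠ j` implies `σᵢ ≠ σⱼ`. -/
theorem qw_sigma_distinct : ∀ i j : ℕ, i ≠ j → σ i ≠ σ j := by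
  intro i j hij h
  rcases Nat.eq_zero_or_pos i with hi | hi
  · subst hi
    have hj : 1 ≤ j := by omega
    have : σ j 1 (x 0) := h ▸ sigma_self 0
    exact not_sigma_zero hj this
  · rcases Nat.eq_zero_or_pos j with hj | hj
    · subst hj
      have : σ i 1 (x 0) := h.symm ▸ sigma_self 0
      exact not_sigma_zero hi this
    · have : σ j 1 (x i) := h ▸ sigma_self i
      exact not_sigma_other hi hj (by omega) this
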